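/- The Wiener index of S_n × K_2 equals 5n² - 8n + 4. -/

import Mathlib

/-- `S_n × K_2` on vertex set `Fin n × Fin 2` (star center: first coordinate `0`). -/
def snK2 (n : ℕ) : SimpleGraph (Fin n × Fin 2) :=
  SimpleGraph.fromRel (fun p q => (p.2 = q.2 ∧ (p.1.val = 0 ∨ q.1.val = 0)) ∨ p.1 = q.1)

lemma snK2_adj {n : ℕ} (p q : Fin n × Fin 2) :
    (snK2 n).Adj p q ↔ p ≠ q ∧ ((p.2 = q.2 ∧ (p.1.val = 0 ∨ q.1.val = 0)) ∨ p.1 = q.1) := by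
  simp only [snK2, SimpleGraph.fromRel_adj]
  constructor
  · rintro ⟨h, (h2 | ⟨⟨he, hc⟩ | he⟩)⟩
    · exact ⟨h, h2⟩
    · exact ⟨h, Or.inl ⟨he.symm, hc.symm⟩⟩
    · exact ⟨h, Or.inr he.symm⟩
  · rintro ⟨h, h2⟩
    exact ⟨h, Or.inl h2⟩

lemma exists_mid {V : Type*} {G : SimpleGraph V} {u v : V} (h : G.dist u v = 2) :
    ∃ w, G.Adj u w ∧ G.Adj w v := by
  have hne : G.dist u v ≠ 0 := by rw [h]; exact two_ne_zero
  obtain ⟨p, hp⟩ := G.exists_walk_of_dist_ne_zero hne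
  rw [h] at hp
  cases p with
  | nil => simp at hp
  | cons h1 q => cases q with
    | nil => simp at hp
    | cons h2 r => cases r with
      | nil => exact ⟨_, h1, h2⟩
      | cons h3 s => simp [SimpleGraph.Walk.length_cons] at hp

def fD {n : ℕ} (u v : Fin n × Fin 2) : ℕ :=
  if u = v then 0 else if u.1 = v.1 then 1 else
    (if u.1.val = 0 ∨ v.1.val = 0 then 1 else 2) + (if u.2 = v.2 then 0 else 1)

lemma fin2_resolve {b j l : Fin 2} (h1 : b ≠ j) (h2 : j ≠ l) : b = l := by
  have := b.isLt; have := j.isLt; have := l.isLt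
  rw [Fin.ext_iff] at *
  omega

lemma dist_formula {n : ℕ} (u v : Fin n × Fin 2) :
    (snK2 n).dist u v = fD u v := by
  obtain ⟨i, j⟩ := u
  obtain ⟨k, l⟩ := v
  by_cases h0 : (i, j) = ((k, l) : Fin n × Fin 2)
  · rw [h0]; simp [fD, SimpleGraph.dist_self]
  rw [fD]
  dsimp only
  simp only [h0, if_false]
  by_cases hik : i = k
  · -- same first coordinate, adjacent
    have hadj : (snK2 n).Adj (i, j) (k, l) := (snK2_adj _ _).2 ⟨h0, Or.inr hik⟩
    rw [SimpleGraph.dist_eq_one_iff_adj.2 hadj, if_pos hik]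
  rw [if_neg hik]
  have hnadjIff : ¬ (snK2 n).Adj (i, j) (k, l) ↔ ¬(j = l ∧ (i.val = 0 ∨ k.val = 0)) := by
    simp [snK2_adj, h0, hik]
  by_cases hc : i.val = 0 ∨ k.val = 0
  · by_cases hjl : j = l
    · -- adjacent through center condition
      have hadj : (snK2 n).Adj (i, j) (k, l) := (snK2_adj _ _).2 ⟨h0, Or.inl ⟨hjl, hc⟩⟩
      rw [SimpleGraph.dist_eq_one_iff_adj.2 hadj]
      simp [hc, hjl]
    · -- distance 2
      have hnadj : ¬ (snK2 n).Adj (i, j) (k, l) := hnadjIff.2 (fun h => hjl h.1)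
      have hmid : ∃ w, (snK2 n).Adj (i, j) w ∧ (snK2 n).Adj w (k, l) := by
        rcases hc with hc | hc
        · refine ⟨(i, l), ?_, ?_⟩
          · exact (snK2_adj _ _).2 ⟨by simp [hjl], Or.inr rfl⟩
          · exact (snK2_adj _ _).2 ⟨by simp [hik], Or.inl ⟨rfl, Or.inl hc⟩⟩
        · refine ⟨(k, j), ?_, ?_⟩
          · exact (snK2_adj _ _).2 ⟨by simp [hik], Or.inl ⟨rfl, Or.inr hc⟩⟩
          · exact (snK2_adj _ _).2 ⟨by simp [hjl], Or.inr rfl⟩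
      obtain ⟨w, hw1, hw2⟩ := hmid
      have hub : (snK2 n).dist (i, j) (k, l) ≤ 2 := by
        have := SimpleGraph.dist_le (SimpleGraph.Walk.cons hw1 (SimpleGraph.Walk.cons hw2 SimpleGraph.Walk.nil))
        simpa using this
      have hne0 : (snK2 n).dist (i, j) (k, l) ≠ 0 :=
        SimpleGraph.dist_ne_zero_iff_ne_and_reachable.2 ⟨h0, ⟨SimpleGraph.Walk.cons hw1 (SimpleGraph.Walk.cons hw2 SimpleGraph.Walk.nil)⟩⟩
      have hne1 : (snK2 n).dist (i, j) (k, l) ≠ 1 := fun h =>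
        hnadj (SimpleGraph.dist_eq_one_iff_adj.1 h)
      simp only [hc, if_true, hjl, if_false]
      omega
  · -- both non-center
    push_neg at hc
    obtain ⟨hi0, hk0⟩ := hc
    have hpos : 0 < n := i.pos
    set c : Fin n := ⟨0, hpos⟩ with hc_def
    have hcv : c.val = 0 := rfl
    have hnadj : ¬ (snK2 n).Adj (i, j) (k, l) := hnadjIff.2 (by
      rintro ⟨-, h | h⟩ <;> omega)
    have hic : i ≠ c := fun h => hi0 (by rw [h])
    have hkc : k ≠ c := fun h => hk0 (by rw [h])
    by_cases hjl : j = l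
    · -- distance 2 via center
      subst hjl
      have hw1 : (snK2 n).Adj (i, j) (c, j) :=
        (snK2_adj _ _).2 ⟨by simp [hic], Or.inl ⟨rfl, Or.inr hcv⟩⟩
      have hw2 : (snK2 n).Adj (c, j) (k, j) :=
        (snK2_adj _ _).2 ⟨by simp [Ne.symm hkc], Or.inl ⟨rfl, Or.inl hcv⟩⟩
      have hub : (snK2 n).dist (i, j) (k, j) ≤ 2 := by
        have := SimpleGraph.dist_le (SimpleGraph.Walk.cons hw1 (SimpleGraph.Walk.cons hw2 SimpleGraph.Walk.nil))
        simpa using this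
      have hne0 : (snK2 n).dist (i, j) (k, j) ≠ 0 :=
        SimpleGraph.dist_ne_zero_iff_ne_and_reachable.2 ⟨h0, ⟨SimpleGraph.Walk.cons hw1 (SimpleGraph.Walk.cons hw2 SimpleGraph.Walk.nil)⟩⟩
      have hne1 : (snK2 n).dist (i, j) (k, j) ≠ 1 := fun h =>
        hnadj (SimpleGraph.dist_eq_one_iff_adj.1 h)
      have : ¬(i.val = 0 ∨ k.val = 0) := by omega
      rw [if_neg this, if_pos rfl]
      omega
    · -- distance 3
      have hw1 : (snK2 n).Adj (i, j) (c, j) :=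
        (snK2_adj _ _).2 ⟨by simp [hic], Or.inl ⟨rfl, Or.inr hcv⟩⟩
      have hw2 : (snK2 n).Adj (c, j) (c, l) :=
        (snK2_adj _ _).2 ⟨by simp [hjl], Or.inr rfl⟩
      have hw3 : (snK2 n).Adj (c, l) (k, l) :=
        (snK2_adj _ _).2 ⟨by simp [Ne.symm hkc], Or.inl ⟨rfl, Or.inl hcv⟩⟩
      set W := SimpleGraph.Walk.cons hw1 (SimpleGraph.Walk.cons hw2 (SimpleGraph.Walk.cons hw3 SimpleGraph.Walk.nil))
      have hub : (snK2 n).dist (i, j) (k, l) ≤ 3 := by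
        have := SimpleGraph.dist_le W
        simpa [W] using this
      have hne0 : (snK2 n).dist (i, j) (k, l) ≠ 0 :=
        SimpleGraph.dist_ne_zero_iff_ne_and_reachable.2 ⟨h0, ⟨W⟩⟩
      have hne1 : (snK2 n).dist (i, j) (k, l) ≠ 1 := fun h =>
        hnadj (SimpleGraph.dist_eq_one_iff_adj.1 h)
      have hne2 : (snK2 n).dist (i, j) (k, l) ≠ 2 := by
        intro h
        obtain ⟨⟨a, b⟩, hw, hw'⟩ := exists_mid h
        rw [snK2_adj] at hw hw'
        dsimp only at hw hw'
        obtain ⟨hne, hcase⟩ := hw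
        obtain ⟨hne', hcase'⟩ := hw'
        rcases hcase with ⟨hb, h1⟩ | h1
        · -- b = j, so a is the center
          have ha : a.val = 0 := by omega
          rcases hcase' with ⟨hb', -⟩ | h2
          · exact hjl (hb.trans hb')
          · exact hk0 (h2 ▸ ha)
        · -- a = i
          have ha0 : a.val ≠ 0 := by rw [← h1]; exact hi0
          rcases hcase' with ⟨hb', h2⟩ | h2
          · omega
          · exact hik (h1.trans h2)
      have : ¬(i.val = 0 ∨ k.val = 0) := by omega
      rw [if_neg this, if_neg hjl]
      omega

lemma zero_ne_succ' {N : ℕ} (a : Fin N) : ((0 : Fin (N + 1)) = a.succ) ↔ False :=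
  iff_false_intro (fun h => Fin.succ_ne_zero a h.symm)

lemma one_ne_succ_succ {N : ℕ} (a : Fin N) : ((1 : Fin (N + 2)) = a.succ.succ) ↔ False := by
  rw [← Fin.succ_zero_eq_one, Fin.succ_inj]
  exact zero_ne_succ' a

lemma succ_succ_ne_one {N : ℕ} (a : Fin N) : (a.succ.succ = (1 : Fin (N + 2))) ↔ False := by
  rw [eq_comm]; exact one_ne_succ_succ a

lemma sum_ite_const {N : ℕ} (i : Fin N) (a b : ℕ) :
    ∑ k : Fin N, (if i = k then a else b) = a + b * (N - 1) := by
  rw [Finset.sum_ite, Finset.sum_const, Finset.sum_const]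
  have h1 : (Finset.univ.filter (fun k => i = k)) = {i} := by
    ext x; simp [eq_comm]
  have h2 : (Finset.univ.filter (fun k => ¬ i = k)) = Finset.univ.erase i := by
    ext x; simp [eq_comm, and_comm]
  rw [h1, h2]
  simp [Finset.card_erase_of_mem, Finset.card_univ, mul_comm]

/-- The Wiener index of `S_n × K_2` is `5n² - 8n + 4`: the sum of all pairwise
distances (each unordered pair counted twice) equals `2·(5n² - 8n + 4)`. -/
theorem wiener_index_snK2 (n : ℕ) (hn : 2 ≤ n) :
    (∑ u : Fin n × Fin 2, ∑ v : Fin n × Fin 2, (snK2 n).dist u v) =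
      2 * (5 * n ^ 2 - 8 * n + 4) := by
  obtain ⟨m, rfl⟩ : ∃ m, n = m + 2 := ⟨n - 2, by omega⟩
  simp only [dist_formula]
  rw [Fintype.sum_prod_type]
  simp only [Fintype.sum_prod_type]
  simp only [Fin.sum_univ_two]
  simp only [← Finset.sum_add_distrib]
  -- now a double sum over Fin (m+2)
  have key : ∀ i k : Fin (m + 2),
      (fD (i, 0) (k, 0) + fD (i, 0) (k, 1)) + (fD (i, 1) (k, 0) + fD (i, 1) (k, 1))
        = if i = k then 2 else if i.val = 0 ∨ k.val = 0 then 6 else 10 := by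
    intro i k
    by_cases hik : i = k
    · subst hik
      simp [fD, Prod.ext_iff]
    · have h1 : ((i, (0 : Fin 2)) : Fin (m+2) × Fin 2) ≠ (k, 0) := by simp [Prod.ext_iff, hik]
      have h2 : ((i, (0 : Fin 2)) : Fin (m+2) × Fin 2) ≠ (k, 1) := by simp [Prod.ext_iff, hik]
      have h3 : ((i, (1 : Fin 2)) : Fin (m+2) × Fin 2) ≠ (k, 0) := by simp [Prod.ext_iff, hik]
      have h4 : ((i, (1 : Fin 2)) : Fin (m+2) × Fin 2) ≠ (k, 1) := by simp [Prod.ext_iff, hik]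
      simp only [fD, h1, h2, h3, h4, if_neg hik, if_false]
      by_cases hc : i = 0 ∨ k = 0 <;> simp [hc, hik]
  simp only [key]
  rw [Fin.sum_univ_succ]
  simp only [Fin.sum_univ_succ]
  simp [zero_ne_succ', one_ne_succ_succ, succ_succ_ne_one, Fin.succ_ne_zero, Fin.succ_inj,
    Fin.val_succ, sum_ite_const, Finset.card_univ]
  have hr : 2 * (5 * (m + 2) ^ 2 - 8 * (m + 2) + 4) = 10 * m ^ 2 + 24 * m + 16 := by
    have h5 : 5 * (m + 2) ^ 2 = 8 * (m + 2) + (5 * m ^ 2 + 12 * m + 4) := by ring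
    rw [h5, Nat.add_sub_cancel_left]
    ring
  rw [hr]
  cases m with
  | zero => norm_num
  | succ p =>
    simp only [Nat.succ_sub_one]
    ring
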